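/- Let $f(x)$ be a polynomial of degree $2$ with nonnegative integer coefficients. Then for any integer $m \ge 2$, we have $\mathrm{lcm}(f(m-1), f(m)) \ge \frac{(m(m-1))^2}{2m-1}$. -/

import Mathlib

set_option maxHeartbeats 1000000 in
/-- Let `f` be a polynomial of degree 2 with nonnegative integer coefficients.
Then for any integer `m ≥ 2`, `lcm(f(m-1), f(m)) ≥ (m(m-1))² / (2m-1)`. -/
theorem lcm_consecutive_quadratic_ge (f : Polynomial ℤ) (hdeg : f.natDegree = 2)
    (hcoeff : ∀ i, 0 ≤ f.coeff i) (m : ℤ) (hm : 2 ≤ m) :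
    ((m : ℚ) * ((m : ℚ) - 1)) ^ 2 / (2 * (m : ℚ) - 1)
      ≤ (Int.lcm (f.eval (m - 1)) (f.eval m) : ℚ) := by
  set a := f.coeff 2 with ha'
  set b := f.coeff 1 with hb'
  set c := f.coeff 0 with hc'
  have hf0 : f ≠ 0 := fun h => by simp [h] at hdeg
  have hane : a ≠ 0 := by
    rw [ha', ← hdeg]
    exact Polynomial.leadingCoeff_ne_zero.mpr hf0
  have ha : 1 ≤ a := lt_of_le_of_ne (hcoeff 2) (Ne.symm hane)
  have hb : 0 ≤ b := hcoeff 1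
  have hc : 0 ≤ c := hcoeff 0
  have heval : ∀ x : ℤ, f.eval x = c + b * x + a * x ^ 2 := by
    intro x
    have h3 : f.natDegree < 3 := by omega
    rw [Polynomial.eval_eq_sum_range' h3, Finset.sum_range_succ, Finset.sum_range_succ,
      Finset.sum_range_one]
    ring
  set u := f.eval (m - 1) with hu'
  set v := f.eval m with hv'
  have hu : u = c + b * (m - 1) + a * (m - 1) ^ 2 := heval _
  have hv : v = c + b * m + a * m ^ 2 := heval _
  have hupos : 0 < u := by nlinarith
  have hvpos : 0 < v := by nlinarith
  have hdiffpos : 0 < v - u := by nlinarith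
  have hdvd : (Int.gcd u v : ℤ) ∣ v - u :=
    dvd_sub (Int.gcd_dvd_right u v) (Int.gcd_dvd_left u v)
  have hdle : (Int.gcd u v : ℤ) ≤ v - u := Int.le_of_dvd hdiffpos hdvd
  have hgpos : 0 < (Int.gcd u v : ℤ) := by
    exact_mod_cast Int.gcd_pos_of_ne_zero_left v hupos.ne'
  have hlcm : (Int.lcm u v : ℤ) * (Int.gcd u v : ℤ) = u * v := by
    have h := Int.gcd_mul_lcm u v
    have h2 : ((Int.gcd u v * Int.lcm u v : ℕ) : ℤ) = ((u * v).natAbs : ℤ) := by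
      rw [Int.natAbs_mul]; exact_mod_cast congrArg (Nat.cast : ℕ → ℤ) h
    rw [Int.natAbs_of_nonneg (by positivity)] at h2
    push_cast at h2
    linarith
  have key : m ^ 2 * (m - 1) ^ 2 * (v - u) ≤ (2 * m - 1) * (u * v) := by
    have hmm0 : (0:ℤ) ≤ m * (m - 1) := by nlinarith
    have hp1 : (0:ℤ) ≤ (m * (m - 1)) * (b * b * (2 * m - 1)) :=
      mul_nonneg hmm0 (mul_nonneg (mul_nonneg hb hb) (by linarith))
    have hin : (0:ℤ) ≤ a * (2 * m - 1) ^ 2 - m * (m - 1) := by nlinarith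
    have hp2 : (0:ℤ) ≤ (m * (m - 1)) * (b * (a * (2 * m - 1) ^ 2 - m * (m - 1))) := by
      have h1 : (0:ℤ) ≤ m * (m - 1) := by nlinarith
      exact mul_nonneg h1 (mul_nonneg hb hin)
    have hp3 : (0:ℤ) ≤ (m * (m - 1)) * (a * (a - 1) * (m * (m - 1) * (2 * m - 1))) := by
      have h1 : (0:ℤ) ≤ m * (m - 1) := by nlinarith
      have h2 : (0:ℤ) ≤ a * (a - 1) := mul_nonneg (by linarith) (by linarith)
      have h3 : (0:ℤ) ≤ 2 * m - 1 := by linarith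
      exact mul_nonneg h1 (mul_nonneg h2 (by positivity))
    have hp4 : (0:ℤ) ≤ (2 * m - 1) * (c * (c + b * (2 * m - 1) + a * ((m - 1) ^ 2 + m ^ 2))) := by
      have h3 : (0:ℤ) ≤ 2 * m - 1 := by linarith
      have h4 : (0:ℤ) ≤ (m - 1) ^ 2 + m ^ 2 := by positivity
      exact mul_nonneg h3 (mul_nonneg hc
        (add_nonneg (add_nonneg hc (mul_nonneg hb (by linarith)))
          (mul_nonneg (by linarith) h4)))
    have hid : (2 * m - 1) * (u * v) - m ^ 2 * (m - 1) ^ 2 * (v - u) =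
        (m * (m - 1)) * (b * b * (2 * m - 1))
        + (m * (m - 1)) * (b * (a * (2 * m - 1) ^ 2 - m * (m - 1)))
        + (m * (m - 1)) * (a * (a - 1) * (m * (m - 1) * (2 * m - 1)))
        + (2 * m - 1) * (c * (c + b * (2 * m - 1) + a * ((m - 1) ^ 2 + m ^ 2))) := by
      rw [hu, hv]; ring
    linarith [hp1, hp2, hp3, hp4]
  have hZ : m ^ 2 * (m - 1) ^ 2 ≤ (Int.lcm u v : ℤ) * (2 * m - 1) := by
    have h1 : m ^ 2 * (m - 1) ^ 2 * (Int.gcd u v : ℤ) ≤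
        ((Int.lcm u v : ℤ) * (2 * m - 1)) * (Int.gcd u v : ℤ) := by
      have hmm : (0:ℤ) ≤ m ^ 2 * (m - 1) ^ 2 := by positivity
      calc m ^ 2 * (m - 1) ^ 2 * (Int.gcd u v : ℤ)
          ≤ m ^ 2 * (m - 1) ^ 2 * (v - u) := by nlinarith
        _ ≤ (2 * m - 1) * (u * v) := key
        _ = ((Int.lcm u v : ℤ) * (2 * m - 1)) * (Int.gcd u v : ℤ) := by
            linear_combination (2 * m - 1) * hlcm.symm
    exact le_of_mul_le_mul_right h1 hgpos
  have h2m : (0:ℚ) < 2 * (m : ℚ) - 1 := by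
    have : (2:ℚ) ≤ (m:ℚ) := by exact_mod_cast hm
    linarith
  rw [div_le_iff₀ h2m]
  have hZQ : ((m:ℚ)) ^ 2 * ((m:ℚ) - 1) ^ 2 ≤ (Int.lcm u v : ℚ) * (2 * (m:ℚ) - 1) := by
    exact_mod_cast hZ
  nlinarith [hZQ]
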